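/- Let X be a topological vector space, f, g : X → ℝ ∪ {+∞} proper continuous convex functions, and α ∈ ℝ. Assume f and g have the intersection property on X at level α (i.e. {f < α} ∩ {g < α} = ∅) and that {f ≤ α} ∩ {g ≤ α} ≠ ∅. Then there exist x₁ ∈ dom(f), x₂ ∈ dom(g), and affine continuous functions φ₁ ∈ ∂_{Φ_conv} f(x₁), φ₂ ∈ ∂_{Φ_conv} g(x₂) such that φ₁ and φ₂ have the intersection property on X at level α. -/

import Mathlib

def edom {X : Type*} (f : X → EReal) : Set X := {x | f x ≠ ⊤}

def ERealConvexOn {X : Type*} [AddCommGroup X] [Module ℝ X] (f : X → EReal) : Prop :=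
  ∀ x y : X, ∀ t : ℝ, 0 ≤ t → t ≤ 1 →
    f (t • x + (1 - t) • y) ≤ (t : EReal) * f x + ((1 - t : ℝ) : EReal) * f y

/-- The class `Φ_conv` of continuous affine functions. -/
def PhiConvCls (X : Type*) [AddCommGroup X] [Module ℝ X] [TopologicalSpace X] :
    Set (X → ℝ) :=
  {φ | ∃ (ℓ : X →L[ℝ] ℝ) (c : ℝ), ∀ x, φ x = ℓ x + c}

/-- The `Φ_conv`-subdifferential of `f` at `x₀`. -/
def SubdiffConv {X : Type*} [AddCommGroup X] [Module ℝ X] [TopologicalSpace X]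
    (f : X → EReal) (x₀ : X) : Set (X → ℝ) :=
  {φ | φ ∈ PhiConvCls X ∧ ∀ x, ((φ x - φ x₀ : ℝ) : EReal) + f x₀ ≤ f x}

def IntersectionProperty {X : Type*} (φ₁ φ₂ : X → ℝ) (α : ℝ) : Prop :=
  {x | φ₁ x < α} ∩ {x | φ₂ x < α} = ∅

lemma sublevel_convex {X : Type*} [AddCommGroup X] [Module ℝ X]
    (f : X → EReal) (hbot : ∀ x, f x ≠ ⊥) (hconv : ERealConvexOn f) (α : ℝ) :
    Convex ℝ {x | f x < (α : EReal)} := by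
  rintro x hx y hy t b ht hb htb
  simp only [Set.mem_setOf_eq] at hx hy ⊢
  lift f x to ℝ using ⟨ne_top_of_lt hx, hbot x⟩ with vx hvx
  lift f y to ℝ using ⟨ne_top_of_lt hy, hbot y⟩ with vy hvy
  rw [EReal.coe_lt_coe_iff] at hx hy
  have hb' : b = 1 - t := by linarith
  have h1 := hconv x y t ht (by linarith)
  rw [← hvx, ← hvy, ← hb'] at h1
  have h2 : (t : EReal) * (vx : EReal) + (b : EReal) * (vy : EReal)
      = ((t * vx + b * vy : ℝ) : EReal) := by
    rw [← EReal.coe_mul, ← EReal.coe_mul, ← EReal.coe_add]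
  calc f (t • x + b • y) ≤ ((t * vx + b * vy : ℝ) : EReal) := by rw [← h2]; exact h1
    _ < (α : EReal) := by
        rw [EReal.coe_lt_coe_iff]
        rcases eq_or_lt_of_le ht with h | h
        · have ht0 : t = 0 := h.symm
          subst ht0
          have hb1 : b = 1 := by linarith
          rw [hb1]
          simpa using hy
        · have h3 : (t + b) * α = α := by rw [htb, one_mul]
          nlinarith [mul_le_mul_of_nonneg_left hy.le hb, mul_lt_mul_of_pos_left hx h]

lemma exists_exact_minorant {X : Type*} [AddCommGroup X] [Module ℝ X] [TopologicalSpace X]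
    [IsTopologicalAddGroup X] [ContinuousSMul ℝ X]
    (f : X → EReal) (hbot : ∀ x, f x ≠ ⊥) (hconv : ERealConvexOn f) (hcont : Continuous f)
    (x₀ : X) (a : ℝ) (hx₀ : f x₀ = (a : EReal))
    (D : Set X) (hD : Convex ℝ D) (hx₀D : x₀ ∈ D)
    (hDf : ∀ x ∈ D, (a : EReal) ≤ f x) :
    ∃ (p : X →L[ℝ] ℝ) (c : ℝ),
      (∀ x, ((p x - c : ℝ) : EReal) ≤ f x) ∧ p x₀ - c = a ∧ ∀ x ∈ D, p x₀ ≤ p x := by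
  set C : Set (X × ℝ) := {q | f q.1 < ((q.2 : ℝ) : EReal)} with hCdef
  have hCopen : IsOpen C :=
    isOpen_lt (hcont.comp continuous_fst) (continuous_coe_real_ereal.comp continuous_snd)
  have hCconv : Convex ℝ C := by
    rintro ⟨x, r⟩ hx ⟨y, s⟩ hy t b ht hb htb
    simp only [hCdef, Set.mem_setOf_eq] at hx hy ⊢
    lift f x to ℝ using ⟨ne_top_of_lt hx, hbot x⟩ with vx hvx
    lift f y to ℝ using ⟨ne_top_of_lt hy, hbot y⟩ with vy hvy
    rw [EReal.coe_lt_coe_iff] at hx hy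
    have hb' : b = 1 - t := by linarith
    have h1 := hconv x y t ht (by linarith)
    rw [← hvx, ← hvy, ← hb'] at h1
    have h2 : (t : EReal) * (vx : EReal) + (b : EReal) * (vy : EReal)
        = ((t * vx + b * vy : ℝ) : EReal) := by
      rw [← EReal.coe_mul, ← EReal.coe_mul, ← EReal.coe_add]
    calc f (t • x + b • y) ≤ ((t * vx + b * vy : ℝ) : EReal) := by
          rw [← h2]; exact h1
      _ < (((t • (x, r) + b • (y, s) : X × ℝ).2 : ℝ) : EReal) := by
          rw [EReal.coe_lt_coe_iff]
          show t * vx + b * vy < t * r + b * s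
          rcases eq_or_lt_of_le ht with h | h
          · have ht0 : t = 0 := h.symm
            subst ht0
            have hb1 : b = 1 := by linarith
            rw [hb1]; linarith
          · nlinarith [mul_le_mul_of_nonneg_left hy.le hb,
              mul_lt_mul_of_pos_left hx h]
  have hdisj : Disjoint C (D ×ˢ Set.Iic a) := by
    rw [Set.disjoint_left]
    rintro ⟨x, r⟩ hxC ⟨hxD, hr⟩
    simp only [hCdef, Set.mem_setOf_eq] at hxC
    exact absurd (hDf x hxD) (not_le.mpr (hxC.trans_le (EReal.coe_le_coe_iff.mpr hr)))
  obtain ⟨L, c, hC, hDL⟩ := geometric_hahn_banach_open hCconv hCopen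
    (hD.prod (convex_Iic a)) hdisj
  set β : ℝ := L (0, 1) with hβdef
  have hL : ∀ (x : X) (r : ℝ), L (x, r) = L (x, 0) + r * β := by
    intro x r
    have : (x, r) = (x, (0:ℝ)) + r • ((0:X), (1:ℝ)) := by
      simp [Prod.ext_iff]
    rw [this, map_add, map_smul, smul_eq_mul]
  have hmemC : ∀ r : ℝ, a < r → (x₀, r) ∈ C := by
    intro r hr
    simp only [hCdef, Set.mem_setOf_eq, hx₀]
    exact EReal.coe_lt_coe_iff.mpr hr
  have hβ : β < 0 := by
    rcases lt_trichotomy β 0 with h | h | h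
    · exact h
    · exfalso
      have h1 := hC _ (hmemC (a + 1) (by linarith))
      have h2 := hDL (x₀, a) ⟨hx₀D, le_refl a⟩
      rw [hL] at h1 h2
      rw [h] at h1 h2; linarith
    · exfalso
      have hmax1 := le_max_left (a + 1) ((c - L (x₀, 0)) / β)
      have hmax2 := le_max_right (a + 1) ((c - L (x₀, 0)) / β)
      have h1 := hC _ (hmemC (max (a + 1) ((c - L (x₀, 0)) / β) + 1) (by linarith))
      rw [hL] at h1
      have h2 : (c - L (x₀, 0)) / β < max (a + 1) ((c - L (x₀, 0)) / β) + 1 := by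
        linarith
      rw [div_lt_iff₀ h] at h2
      linarith
  set p : X →L[ℝ] ℝ := (-β)⁻¹ • (L.comp (ContinuousLinearMap.inl ℝ X ℝ)) with hpdef
  set c' : ℝ := (-β)⁻¹ * c with hc'def
  have hβpos : 0 < -β := by linarith
  have hp : ∀ x : X, p x = (-β)⁻¹ * L (x, 0) := by
    intro x; simp [hpdef]
  have key1 : ∀ (x : X) (r : ℝ), f x < (r : EReal) → p x - c' < r := by
    intro x r hr
    have h1 := hC (x, r) hr
    rw [hL] at h1
    have e : p x - c' = (L (x, 0) - c) / (-β) := by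
      rw [hp, hc'def]; ring
    rw [e, div_lt_iff₀ hβpos]
    linarith
  have key2 : ∀ x ∈ D, (a : ℝ) ≤ p x - c' := by
    intro x hx
    have h1 := hDL (x, a) ⟨hx, le_refl a⟩
    rw [hL] at h1
    have e : p x - c' = (L (x, 0) - c) / (-β) := by
      rw [hp, hc'def]; ring
    rw [e, le_div_iff₀ hβpos]
    linarith
  have hle : ∀ x, ((p x - c' : ℝ) : EReal) ≤ f x := by
    intro x
    rcases eq_or_ne (f x) ⊤ with h | h
    · rw [h]; exact le_top
    · lift f x to ℝ using ⟨h, hbot x⟩ with v hv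
      rw [EReal.coe_le_coe_iff]
      by_contra hcon
      push_neg at hcon
      have := key1 x ((v + (p x - c')) / 2)
        (by rw [← hv]; exact EReal.coe_lt_coe_iff.mpr (by linarith))
      linarith
  have hx₀eq : p x₀ - c' = a := by
    have h1 := hle x₀
    rw [hx₀, EReal.coe_le_coe_iff] at h1
    exact le_antisymm h1 (key2 x₀ hx₀D)
  refine ⟨p, c', hle, hx₀eq, fun x hx => ?_⟩
  have := key2 x hx
  linarith [hx₀eq]

theorem intersection_property_conv_subgradients
    {X : Type*} [AddCommGroup X] [Module ℝ X] [TopologicalSpace X]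
    [IsTopologicalAddGroup X] [ContinuousSMul ℝ X] [LocallyConvexSpace ℝ X]
    (f g : X → EReal) (hfbot : ∀ x, f x ≠ ⊥) (hgbot : ∀ x, g x ≠ ⊥)
    (hfproper : (edom f).Nonempty) (hgproper : (edom g).Nonempty)
    (hfconv : ERealConvexOn f) (hgconv : ERealConvexOn g)
    (hfcont : Continuous f) (hgcont : Continuous g)
    (α : ℝ)
    (hIP : {x | f x < (α : EReal)} ∩ {x | g x < (α : EReal)} = ∅)
    (hmeet : ({x | f x ≤ (α : EReal)} ∩ {x | g x ≤ (α : EReal)}).Nonempty) :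
    ∃ x₁ ∈ edom f, ∃ x₂ ∈ edom g,
      ∃ φ₁ ∈ SubdiffConv f x₁, ∃ φ₂ ∈ SubdiffConv g x₂,
        IntersectionProperty φ₁ φ₂ α := by
  obtain ⟨x₀, hfx₀, hgx₀⟩ := hmeet
  simp only [Set.mem_setOf_eq] at hfx₀ hgx₀
  lift f x₀ to ℝ using ⟨(lt_of_le_of_lt hfx₀ (EReal.coe_lt_top α)).ne, hfbot x₀⟩ with af haf
  lift g x₀ to ℝ using ⟨(lt_of_le_of_lt hgx₀ (EReal.coe_lt_top α)).ne, hgbot x₀⟩ with ag hag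
  have hafα : af ≤ α := EReal.coe_le_coe_iff.mp hfx₀
  have hagα : ag ≤ α := EReal.coe_le_coe_iff.mp hgx₀
  have hfx₀' : f x₀ ≤ (α : EReal) := by rw [← haf]; exact hfx₀
  have hgx₀' : g x₀ ≤ (α : EReal) := by rw [← hag]; exact hgx₀
  -- segment lemma
  have seg : ∀ (h : X → EReal), (∀ x, h x ≠ ⊥) → ERealConvexOn h → h x₀ ≤ (α : EReal) →
      ∀ y, h y < (α : EReal) → ∀ t : ℝ, 0 < t → t ≤ 1 →
      h (t • y + (1 - t) • x₀) < (α : EReal) := by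
    intro h hb hc hx₀le y hy t ht0 ht1
    lift h y to ℝ using ⟨ne_top_of_lt hy, hb y⟩ with vy hvy
    lift h x₀ to ℝ using ⟨(lt_of_le_of_lt hx₀le (EReal.coe_lt_top α)).ne, hb x₀⟩ with v₀ hv₀
    rw [EReal.coe_lt_coe_iff] at hy
    rw [EReal.coe_le_coe_iff] at hx₀le
    have h1 := hc y x₀ t ht0.le ht1
    rw [← hvy, ← hv₀] at h1
    have h2 : (t : EReal) * (vy : EReal) + ((1 - t : ℝ) : EReal) * (v₀ : EReal)
        = ((t * vy + (1 - t) * v₀ : ℝ) : EReal) := by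
      rw [← EReal.coe_mul, ← EReal.coe_mul, ← EReal.coe_add]
    calc h (t • y + (1 - t) • x₀) ≤ ((t * vy + (1 - t) * v₀ : ℝ) : EReal) := by
          rw [← h2]; exact h1
      _ < (α : EReal) := by
          rw [EReal.coe_lt_coe_iff]
          nlinarith [mul_lt_mul_of_pos_left hy ht0,
            mul_le_mul_of_nonneg_left hx₀le (by linarith : (0:ℝ) ≤ 1 - t)]
  have main : ∃ Df Dg : Set X, Convex ℝ Df ∧ Convex ℝ Dg ∧ x₀ ∈ Df ∧ x₀ ∈ Dg ∧
      (∀ x, x ∈ Df ∨ x ∈ Dg) ∧ (∀ x ∈ Df, f x₀ ≤ f x) ∧ (∀ x ∈ Dg, g x₀ ≤ g x) := by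
    by_cases hA : {x | f x < (α : EReal)}.Nonempty
    · by_cases hB : {x | g x < (α : EReal)}.Nonempty
      · -- separate the two open convex sublevel sets
        have hAopen : IsOpen {x | f x < (α : EReal)} := isOpen_lt hfcont continuous_const
        have hBopen : IsOpen {x | g x < (α : EReal)} := isOpen_lt hgcont continuous_const
        have hdisj : Disjoint {x | f x < (α : EReal)} {x | g x < (α : EReal)} :=
          Set.disjoint_iff_inter_eq_empty.mpr hIP
        obtain ⟨ℓ, u, hAl, hBl⟩ := geometric_hahn_banach_open_open
          (sublevel_convex f hfbot hfconv α) hAopen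
          (sublevel_convex g hgbot hgconv α) hBopen hdisj
        -- ℓ x₀ = u via segment arguments
        have keyseg : ∀ w w₀ uu : ℝ,
            (∀ t : ℝ, 0 < t → t ≤ 1 → t * w + (1 - t) * w₀ < uu) → w₀ ≤ uu := by
          intro w w₀ uu hseg
          by_contra hcon
          push_neg at hcon
          have hMpos : (0:ℝ) < |w - w₀| + 1 := by positivity
          have ht0 : 0 < min 1 ((w₀ - uu) / (|w - w₀| + 1)) :=
            lt_min one_pos (div_pos (by linarith) hMpos)
          have htM : min 1 ((w₀ - uu) / (|w - w₀| + 1)) * (|w - w₀| + 1) ≤ w₀ - uu := by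
            rw [← le_div_iff₀ hMpos]; exact min_le_right _ _
          have h1 := hseg _ ht0 (min_le_left _ _)
          nlinarith [mul_le_mul_of_nonneg_left (neg_abs_le (w - w₀)) ht0.le]
        have hle1 : ℓ x₀ ≤ u := by
          obtain ⟨y, hy⟩ := hA
          refine keyseg (ℓ y) (ℓ x₀) u (fun t ht0 ht1 => ?_)
          have := hAl _ (seg f hfbot hfconv hfx₀' y hy t ht0 ht1)
          simpa [map_add, map_smul, smul_eq_mul] using this
        have hle2 : u ≤ ℓ x₀ := by
          obtain ⟨y, hy⟩ := hB
          have h := keyseg (-(ℓ y)) (-(ℓ x₀)) (-u) (fun t ht0 ht1 => ?_)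
          · linarith
          · have := hBl _ (seg g hgbot hgconv hgx₀' y hy t ht0 ht1)
            simp only [map_add, map_smul, smul_eq_mul] at this
            linarith
        have hℓ : ℓ x₀ = u := le_antisymm hle1 hle2
        refine ⟨{x | u ≤ ℓ x}, {x | ℓ x ≤ u},
          convex_halfSpace_ge ⟨map_add ℓ, map_smul ℓ⟩ u,
          convex_halfSpace_le ⟨map_add ℓ, map_smul ℓ⟩ u,
          le_of_eq hℓ.symm, le_of_eq hℓ, fun x => le_total u (ℓ x), ?_, ?_⟩
        · intro x hx
          by_contra h
          push_neg at h
          have hxA : f x < (α : EReal) := lt_of_lt_of_le h hfx₀'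
          have := hAl x hxA
          simp only [Set.mem_setOf_eq] at hx
          linarith
        · intro x hx
          by_contra h
          push_neg at h
          have hxB : g x < (α : EReal) := lt_of_lt_of_le h hgx₀'
          have := hBl x hxB
          simp only [Set.mem_setOf_eq] at hx
          linarith
      · -- g ≥ α everywhere
        push_neg at hB
        refine ⟨{x₀}, Set.univ, convex_singleton x₀, convex_univ, rfl, trivial,
          fun x => Or.inr trivial, ?_, ?_⟩
        · rintro x rfl; exact le_refl _
        · intro x _
          have : ¬ (g x < (α : EReal)) := by
            intro h
            exact Set.notMem_empty x (hB ▸ (h : x ∈ {x | g x < (α : EReal)}))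
          exact le_trans hgx₀' (not_lt.mp this)
    · push_neg at hA
      refine ⟨Set.univ, {x₀}, convex_univ, convex_singleton x₀, trivial, rfl,
        fun x => Or.inl trivial, ?_, ?_⟩
      · intro x _
        have : ¬ (f x < (α : EReal)) := by
          intro h
          exact Set.notMem_empty x (hA ▸ (h : x ∈ {x | f x < (α : EReal)}))
        exact le_trans hfx₀' (not_lt.mp this)
      · rintro x rfl; exact le_refl _
  obtain ⟨Df, Dg, hDfc, hDgc, hx₀Df, hx₀Dg, hunion, hfDf, hgDg⟩ := main
  obtain ⟨p₁, c₁, hle₁, heq₁, hmono₁⟩ := exists_exact_minorant f hfbot hfconv hfcont x₀ af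
    haf.symm Df hDfc hx₀Df (fun x hx => by rw [haf]; exact hfDf x hx)
  obtain ⟨p₂, c₂, hle₂, heq₂, hmono₂⟩ := exists_exact_minorant g hgbot hgconv hgcont x₀ ag
    hag.symm Dg hDgc hx₀Dg (fun x hx => by rw [hag]; exact hgDg x hx)
  refine ⟨x₀, by simp [edom, ← haf], x₀, by simp [edom, ← hag],
    fun x => p₁ x - c₁ + (α - af), ⟨⟨p₁, -c₁ + (α - af), fun x => by ring⟩, ?_⟩,
    fun x => p₂ x - c₂ + (α - ag), ⟨⟨p₂, -c₂ + (α - ag), fun x => by ring⟩, ?_⟩, ?_⟩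
  · intro x
    rw [← haf]
    calc ((p₁ x - c₁ + (α - af) - (p₁ x₀ - c₁ + (α - af)) : ℝ) : EReal) + (af : EReal)
        = ((p₁ x - c₁ : ℝ) : EReal) := by
          rw [← EReal.coe_add]; norm_cast; linarith [heq₁]
      _ ≤ f x := hle₁ x
  · intro x
    rw [← hag]
    calc ((p₂ x - c₂ + (α - ag) - (p₂ x₀ - c₂ + (α - ag)) : ℝ) : EReal) + (ag : EReal)
        = ((p₂ x - c₂ : ℝ) : EReal) := by
          rw [← EReal.coe_add]; norm_cast; linarith [heq₂]
      _ ≤ g x := hle₂ x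
  · rw [IntersectionProperty, Set.eq_empty_iff_forall_notMem]
    rintro x ⟨h1, h2⟩
    simp only [Set.mem_setOf_eq] at h1 h2
    rcases hunion x with hx | hx
    · have := hmono₁ x hx
      linarith [heq₁]
    · have := hmono₂ x hx
      linarith [heq₂]
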